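/- Let K ≥ 1 and c < 0 be reals. Every local minimum of t(v) = c·∑_{k=1}^K v_k⁴ + 2 on the unit sphere {v ∈ ℝ^K : ∑ v_k² = 1} is a point where all coordinates but one are zero. -/

import Mathlib

open Filter Set Function Topology

lemma sum_update_two {K : ℕ} (v : Fin K → ℝ) (i j : Fin K) (hij : j ≠ i) (x y : ℝ)
    (p : ℝ → ℝ) :
    ∑ k, p (Function.update (Function.update v i x) j y k)
      = (∑ k, p (v k)) + (p x - p (v i)) + (p y - p (v j)) := by
  classical
  simp only [Function.apply_update (fun _ z => p z)]
  rw [Finset.sum_update_of_mem (Finset.mem_univ j)]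
  have hi : i ∈ Finset.univ \ {j} := by simp [hij.symm]
  rw [Finset.sum_update_of_mem hi]
  have h1 : ∑ k ∈ (Finset.univ \ {j}) \ {i}, p (v k)
      = (∑ k, p (v k)) - p (v j) - p (v i) := by
    rw [Finset.sum_sdiff_eq_sub (by simp [hi]), Finset.sum_sdiff_eq_sub (Finset.subset_univ _)]
    simp
  rw [h1]; ring

lemma aux_two_nonzero (K : ℕ) (c : ℝ) (hc : c < 0)
    (v : Fin K → ℝ) (hv : (∑ k, (v k) ^ 2) = 1)
    (hmin : IsLocalMinOn (fun w : Fin K → ℝ => c * (∑ k, (w k) ^ 4) + 2)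
      {w : Fin K → ℝ | (∑ k, (w k) ^ 2) = 1} v)
    (i j : Fin K) (hij : j ≠ i) (ha : v i ≠ 0) (hab : (v i) ^ 2 ≤ (v j) ^ 2) : False := by
  classical
  set a := v i with ha'
  set b := v j with hb'
  have hb : b ≠ 0 := by
    intro h
    rw [h] at hab
    have h2 : (0:ℝ) < a ^ 2 := by positivity
    nlinarith
  have ha2 : 0 < a ^ 2 := by positivity
  -- the perturbation
  set A : ℝ → ℝ := fun t => (Real.sqrt (a ^ 2 - t) / |a|) * a with hA
  set B : ℝ → ℝ := fun t => (Real.sqrt (b ^ 2 + t) / |b|) * b with hB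
  set F : ℝ → (Fin K → ℝ) := fun t => Function.update (Function.update v i (A t)) j (B t)
    with hF
  have hA0 : A 0 = a := by
    simp only [hA, sub_zero, Real.sqrt_sq_eq_abs, div_mul_eq_mul_div]
    field_simp
  have hB0 : B 0 = b := by
    simp only [hB, add_zero, Real.sqrt_sq_eq_abs, div_mul_eq_mul_div]
    field_simp
  have hF0 : F 0 = v := by
    rw [hF]
    simp only [hA0, hB0, ← ha', ← hb', Function.update_eq_self]
    rw [ha', hb', Function.update_eq_self, Function.update_eq_self]
  -- squares on Ioo 0 (a^2)
  have hAsq : ∀ t ∈ Ioo (0:ℝ) (a ^ 2), (A t) ^ 2 = a ^ 2 - t := by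
    intro t ht
    have h1 : (0:ℝ) ≤ a ^ 2 - t := by linarith [ht.2]
    have : (A t) ^ 2 = (Real.sqrt (a ^ 2 - t)) ^ 2 * (a ^ 2 / |a| ^ 2) := by ring
    rw [this, Real.sq_sqrt h1, sq_abs]
    field_simp
  have hBsq : ∀ t ∈ Ioo (0:ℝ) (a ^ 2), (B t) ^ 2 = b ^ 2 + t := by
    intro t ht
    have h1 : (0:ℝ) ≤ b ^ 2 + t := by nlinarith [ht.1]
    have : (B t) ^ 2 = (Real.sqrt (b ^ 2 + t)) ^ 2 * (b ^ 2 / |b| ^ 2) := by ring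
    rw [this, Real.sq_sqrt h1, sq_abs]
    field_simp
  -- F t is on the sphere
  have hFsphere : ∀ t ∈ Ioo (0:ℝ) (a ^ 2), (∑ k, (F t k) ^ 2) = 1 := by
    intro t ht
    have := sum_update_two v i j hij (A t) (B t) (fun z => z ^ 2)
    simp only [hF]
    rw [this, hAsq t ht, hBsq t ht, hv]
    ring
  -- the value strictly decreases
  have hFlt : ∀ t ∈ Ioo (0:ℝ) (a ^ 2),
      c * (∑ k, (F t k) ^ 4) + 2 < c * (∑ k, (v k) ^ 4) + 2 := by
    intro t ht
    have hsum := sum_update_two v i j hij (A t) (B t) (fun z => z ^ 4)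
    have hA4 : (A t) ^ 4 = (a ^ 2 - t) ^ 2 := by
      rw [show (A t) ^ 4 = ((A t) ^ 2) ^ 2 by ring, hAsq t ht]
    have hB4 : (B t) ^ 4 = (b ^ 2 + t) ^ 2 := by
      rw [show (B t) ^ 4 = ((B t) ^ 2) ^ 2 by ring, hBsq t ht]
    simp only [hF]
    rw [hsum, hA4, hB4]
    have hpos : (a ^ 2 - t) ^ 2 - a ^ 4 + ((b ^ 2 + t) ^ 2 - b ^ 4) > 0 := by
      nlinarith [ht.1, ht.2]
    nlinarith
  -- continuity: F t → v as t → 0⁺ within Ioo 0 (a^2)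
  have hcA : Continuous A := by
    apply Continuous.mul _ continuous_const
    exact ((Real.continuous_sqrt.comp (by continuity)).div_const _)
  have hcB : Continuous B := by
    apply Continuous.mul _ continuous_const
    exact ((Real.continuous_sqrt.comp (by continuity)).div_const _)
  have hcF : Continuous F := by
    apply Continuous.update
    · exact Continuous.update continuous_const i hcA
    · exact hcB
  have hL : Filter.NeBot (𝓝[Ioo (0:ℝ) (a ^ 2)] 0) := by
    rw [nhdsWithin_Ioo_eq_nhdsGT ha2]
    infer_instance
  have htends : Tendsto F (𝓝[Ioo (0:ℝ) (a ^ 2)] 0)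
      (𝓝[{w : Fin K → ℝ | (∑ k, (w k) ^ 2) = 1}] v) := by
    rw [tendsto_nhdsWithin_iff]
    constructor
    · have := hcF.continuousAt (x := (0:ℝ))
      rw [ContinuousAt, hF0] at this
      exact this.mono_left nhdsWithin_le_nhds
    · filter_upwards [self_mem_nhdsWithin] with t ht
      exact hFsphere t ht
  have hev1 : ∀ᶠ t in 𝓝[Ioo (0:ℝ) (a ^ 2)] 0,
      c * (∑ k, (v k) ^ 4) + 2 ≤ c * (∑ k, (F t k) ^ 4) + 2 := htends.eventually hmin
  have hev2 : ∀ᶠ t in 𝓝[Ioo (0:ℝ) (a ^ 2)] 0,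
      c * (∑ k, (F t k) ^ 4) + 2 < c * (∑ k, (v k) ^ 4) + 2 := by
    filter_upwards [self_mem_nhdsWithin] with t ht
    exact hFlt t ht
  obtain ⟨t, h1, h2⟩ := (hev1.and hev2).exists
  linarith

theorem sphere_quartic_local_min (K : ℕ) (hK : 1 ≤ K) (c : ℝ) (hc : c < 0)
    (v : Fin K → ℝ) (hv : (∑ k, (v k) ^ 2) = 1)
    (hmin : IsLocalMinOn (fun w : Fin K → ℝ => c * (∑ k, (w k) ^ 4) + 2)
      {w : Fin K → ℝ | (∑ k, (w k) ^ 2) = 1} v) :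
    ∃ k0, ∀ k, k ≠ k0 → v k = 0 := by
  by_contra h
  push_neg at h
  have hi : ∃ i, v i ≠ 0 := by
    by_contra h'
    push_neg at h'
    simp [h'] at hv
  obtain ⟨i, hi⟩ := hi
  obtain ⟨j, hji, hj⟩ := h i
  rcases le_total ((v i) ^ 2) ((v j) ^ 2) with hle | hle
  · exact aux_two_nonzero K c hc v hv hmin i j hji hi hle
  · exact aux_two_nonzero K c hc v hv hmin j i hji.symm hj hle
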